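/- Confidentiality as an instance of well-propagation: Under the hypotheses of the abstract well-propagation theorem, instantiate 𝔇 = {secret, public} and the policy 𝔓(d,ℓ₁,ℓ₂) ⇔ d = public. If the analysis is valid for N and every abstract value occurring in any κ(ℓ₂) message is tagged public by 𝔗_S, then N has no leaks: no reduct of N can send a message containing a value whose abstract tree is tagged secret by 𝔗_D. -/

import Mathlib

inductive Tag where
  | secret
  | public'
deriving DecidableEq

/-- Confidentiality as an instance of well-propagation: with tags
`{secret, public}` and policy `d = public`, if the analysis is valid for `N` and
every abstract value occurring in any `κ` message is tagged `public` by `TS`,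
then no reduct of `N` can send a message containing a value whose abstract tree
is tagged `secret` by `TD`. -/
theorem confidentiality_no_leaks
    {Sys L V T G : Type*}
    (Step : Sys → Sys → Prop)
    (Comm : Sys → L → L → List V → Sys → Prop)
    (tree : V → T)
    (Lang : G → Set T)
    (κ : L → Set (L × List (Set G)))
    (Valid : Sys → Prop)
    (hSR : ∀ N N', Valid N → Step N N' → Valid N')
    (hComm : ∀ N ℓ₁ ℓ₂ (vs : List V) N', Valid N → Comm N ℓ₁ ℓ₂ vs N' →
      ∃ avs : List (Set G), (ℓ₁, avs) ∈ κ ℓ₂ ∧ avs.length = vs.length ∧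
        ∀ i (hv : i < vs.length) (ha : i < avs.length),
          ∃ Gh ∈ avs.get ⟨i, ha⟩, tree (vs.get ⟨i, hv⟩) ∈ Lang Gh)
    (TD : T → Tag) (TS : Set G → Tag)
    (hTag : ∀ av : Set G, ∀ g ∈ av, ∀ t ∈ Lang g, TD t = TS av)
    (N : Sys) (hValid : Valid N)
    -- every abstract value occurring in any κ message is tagged public
    (hκ : ∀ ℓ₁ ℓ₂ (avs : List (Set G)), (ℓ₁, avs) ∈ κ ℓ₂ →
      ∀ av ∈ avs, TS av = Tag.public') :
    -- no leaks
    ∀ N', Relation.ReflTransGen Step N N' →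
      ∀ ℓ₁ ℓ₂ (vs : List V) N'', Comm N' ℓ₁ ℓ₂ vs N'' →
        ∀ i (hv : i < vs.length), TD (tree (vs.get ⟨i, hv⟩)) ≠ Tag.secret := by
  have key : ∀ M, Relation.ReflTransGen Step N M → Valid M := by
    intro M h
    induction h with
    | refl => exact hValid
    | tail _ h ih => exact hSR _ _ ih h
  intro N' hsteps ℓ₁ ℓ₂ vs N'' hcomm i hv
  have hValid' : Valid N' := key N' hsteps
  obtain ⟨avs, hmem, hlen, hall⟩ := hComm N' ℓ₁ ℓ₂ vs N'' hValid' hcomm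
  have ha : i < avs.length := hlen ▸ hv
  obtain ⟨g, hg, ht⟩ := hall i hv ha
  rw [hTag _ g hg _ ht, hκ ℓ₁ ℓ₂ avs hmem _ (avs.get_mem _)]
  simp
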